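/- If L is an infinite computable linear order, then either L has a computable infinite descending sequence, or L has a 0'-computable infinite ascending sequence. -/

import Mathlib

/-- Partial recursiveness relative to an oracle `O : ℕ → ℕ`. -/
inductive RecursiveInOracle (O : ℕ → ℕ) : (ℕ →. ℕ) → Prop
  | zero : RecursiveInOracle O (pure 0)
  | succ : RecursiveInOracle O ↑Nat.succ
  | left : RecursiveInOracle O ↑fun n : ℕ => n.unpair.1
  | right : RecursiveInOracle O ↑fun n : ℕ => n.unpair.2
  | oracle : RecursiveInOracle O ↑O
  | pair {f g : ℕ →. ℕ} : RecursiveInOracle O f → RecursiveInOracle O g →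
      RecursiveInOracle O fun n => Nat.pair <$> f n <*> g n
  | comp {f g : ℕ →. ℕ} : RecursiveInOracle O f → RecursiveInOracle O g →
      RecursiveInOracle O fun n => g n >>= f
  | prec {f g : ℕ →. ℕ} : RecursiveInOracle O f → RecursiveInOracle O g →
      RecursiveInOracle O (Nat.unpaired fun a n =>
        n.rec (f a) fun y IH => do let i ← IH; g (Nat.pair a (Nat.pair y i)))
  | rfind {f : ℕ →. ℕ} : RecursiveInOracle O f →
      RecursiveInOracle O fun a => Nat.rfind fun n => (fun m => m = 0) <$> f (Nat.pair a n)

open Classical in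
/-- The halting problem `0'` as a 0-1 valued function: on input `n = ⟨e, x⟩`,
decide whether the `e`-th partial recursive function halts on `x`. -/
noncomputable def jump : ℕ → ℕ := fun n =>
  if ((Denumerable.ofNat Nat.Partrec.Code n.unpair.1).eval n.unpair.2).Dom then 1 else 0

theorem RecursiveInOracle.of_eq {O : ℕ → ℕ} {f g : ℕ →. ℕ} (hf : RecursiveInOracle O f)
    (H : ∀ n, f n = g n) : RecursiveInOracle O g :=
  (funext H : f = g) ▸ hf

theorem Nat.Partrec.recursiveInOracle {f : ℕ →. ℕ} (hf : Nat.Partrec f) (O : ℕ → ℕ) :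
    RecursiveInOracle O f := by
  induction hf with
  | zero => exact RecursiveInOracle.zero
  | succ => exact RecursiveInOracle.succ
  | left => exact RecursiveInOracle.left
  | right => exact RecursiveInOracle.right
  | pair _ _ pf pg => exact RecursiveInOracle.pair pf pg
  | comp _ _ pf pg => exact RecursiveInOracle.comp pf pg
  | prec _ _ pf pg => exact RecursiveInOracle.prec pf pg
  | rfind _ pf => exact RecursiveInOracle.rfind pf

theorem Computable.recursiveInOracle {f : ℕ → ℕ} (hf : Computable f) (O : ℕ → ℕ) :
    RecursiveInOracle O ↑f :=
  (Partrec.nat_iff.1 hf.partrec).recursiveInOracle O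

theorem RecursiveInOracle.partrec_of_zero {f : ℕ →. ℕ} (hf : RecursiveInOracle (fun _ => 0) f) :
    Nat.Partrec f := by
  induction hf with
  | zero => exact Nat.Partrec.zero
  | succ => exact Nat.Partrec.succ
  | left => exact Nat.Partrec.left
  | right => exact Nat.Partrec.right
  | oracle => exact Nat.Partrec.zero.of_eq (by simp [pure, PFun.pure])
  | pair _ _ pf pg => exact Nat.Partrec.pair pf pg
  | comp _ _ pf pg => exact Nat.Partrec.comp pf pg
  | prec _ _ pf pg => exact Nat.Partrec.prec pf pg
  | rfind _ pf => exact Nat.Partrec.rfind pf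

theorem RecursiveInOracle.const (O : ℕ → ℕ) (m : ℕ) : RecursiveInOracle O (fun _ => Part.some m) :=
  ((Computable.const m).recursiveInOracle O).of_eq fun _ => rfl

theorem recursiveIn_find_chain {O : ℕ → ℕ} {q : ℕ → ℕ} (hq : RecursiveInOracle O ↑q)
    {a : ℕ → ℕ} (hex : ∀ n, ∃ y, q (Nat.pair (a n) y) = 0)
    (hfind : ∀ n, a (n + 1) = Nat.find (hex n)) : RecursiveInOracle O ↑a := by
  have hstep : RecursiveInOracle O
      (fun x => Nat.rfind fun n => (fun m => m = 0) <$> (↑q : ℕ →. ℕ) (Nat.pair x n)) := hq.rfind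
  have key : ∀ n, (Nat.rfind fun k => (fun m => m = 0) <$> (↑q : ℕ →. ℕ) (Nat.pair (a n) k))
      = Part.some (a (n + 1)) := by
    intro n
    apply Part.eq_some_iff.2
    rw [hfind n]
    apply Nat.mem_rfind.2
    constructor
    · simp [Nat.find_spec (hex n)]
    · intro m hm
      have := Nat.find_min (hex n) hm
      simp [this]
  have hP := RecursiveInOracle.prec (RecursiveInOracle.const O (a 0))
    (RecursiveInOracle.comp hstep (RecursiveInOracle.comp RecursiveInOracle.right RecursiveInOracle.right))
  have hfinal := RecursiveInOracle.comp hP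
    ((Primrec₂.natPair.comp (Primrec.const 0) Primrec.id).to_comp.recursiveInOracle O)
  apply hfinal.of_eq
  intro n
  induction n with
  | zero =>
    simp [Nat.unpaired]
  | succ n IH =>
    simp only [PFun.coe_val, id_eq, Part.bind_eq_bind, Part.bind_some, Nat.unpaired,
      Nat.unpair_pair, Nat.rec_add_one] at IH ⊢
    rw [IH, Part.bind_some]
    erw [Part.bind_eq_bind, Part.bind_some, PFun.coe_val, Part.bind_some]
    simpa [Nat.unpair_pair] using key n

open Classical in
/-- Iterated least-witness chain: `a 0 = m`, `a (n+1)` is the least `y` with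
`q (Nat.pair (a n) y) = 0` (or junk `0` if there is none). -/
noncomputable def findChain (q : ℕ → ℕ) (m : ℕ) : ℕ → ℕ
  | 0 => m
  | n + 1 =>
    if h : ∃ y, q (Nat.pair (findChain q m n) y) = 0 then Nat.find h else 0

theorem findChain_succ {q : ℕ → ℕ} {m n : ℕ}
    (h : ∃ y, q (Nat.pair (findChain q m n) y) = 0) :
    findChain q m (n + 1) = Nat.find h := by
  rw [findChain, dif_pos h]


/-- if `L` is an infinite computable linear order (here: a computable
strict linear order `lt` on all of ω), then either `L` has a computable infinite
descending sequence, or `L` has a `0'`-computable infinite ascending sequence. -/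
theorem computable_descending_or_jump_ascending (lt : ℕ → ℕ → Bool)
    (hcomp : Computable₂ fun a b => lt a b)
    (hirr : ∀ a, lt a a = false)
    (htrans : ∀ a b c, lt a b = true → lt b c = true → lt a c = true)
    (htotal : ∀ a b, a ≠ b → lt a b = true ∨ lt b a = true) :
    (∃ a : ℕ → ℕ, Computable a ∧ ∀ n, lt (a (n + 1)) (a n) = true) ∨
      (∃ a : ℕ → ℕ, RecursiveInOracle jump ↑a ∧ ∀ n, lt (a n) (a (n + 1)) = true) := by
  classical
  have u1 : Computable fun w : ℕ => w.unpair.1 := (Primrec.fst.comp Primrec.unpair).to_comp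
  have u2 : Computable fun w : ℕ => w.unpair.2 := (Primrec.snd.comp Primrec.unpair).to_comp
  by_cases hnl : ∀ x : ℕ, ∃ y, lt y x = true
  · -- no least element: computable descending sequence
    left
    set q : ℕ → ℕ := fun p => cond (lt p.unpair.2 p.unpair.1) 0 1 with hqdef
    have hqc : Computable q :=
      Computable.cond (hcomp.comp u2 u1) (Computable.const 0) (Computable.const 1)
    have hq0 : ∀ x y, q (Nat.pair x y) = 0 ↔ lt y x = true := by
      intro x y
      simp only [hqdef, Nat.unpair_pair]
      cases h : lt y x <;> simp
    set a := findChain q 0 with ha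
    have hex : ∀ n, ∃ y, q (Nat.pair (a n) y) = 0 :=
      fun n => (hnl (a n)).imp fun y hy => (hq0 _ _).2 hy
    have hfind : ∀ n, a (n + 1) = Nat.find (hex n) := fun n => findChain_succ (hex n)
    refine ⟨a, ?_, ?_⟩
    · exact Partrec.nat_iff.2
        ((recursiveIn_find_chain (hqc.recursiveInOracle _) hex hfind).partrec_of_zero)
    · intro n
      have h := Nat.find_spec (hex n)
      rw [← hfind n] at h
      exact (hq0 _ _).1 h
  · by_cases hsu : ∀ x : ℕ, (∃ y, lt x y = true) →
        ∃ y, lt x y = true ∧ ∀ z, ¬(lt x z = true ∧ lt z y = true)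
    · -- least element + successors: jump-computable ascending sequence
      right
      push_neg at hnl
      obtain ⟨m, hm⟩ := hnl
      -- the "is there something strictly between" partial function and its code
      set g : ℕ → ℕ := fun w =>
        cond (lt w.unpair.1.unpair.1 w.unpair.2)
          (cond (lt w.unpair.2 w.unpair.1.unpair.2) 0 1) 1 with hgdef
      have hgc : Computable g :=
        Computable.cond (hcomp.comp (u1.comp u1) u2)
          (Computable.cond (hcomp.comp u2 (u2.comp u1)) (Computable.const 0)
            (Computable.const 1))
          (Computable.const 1)
      have hg0 : ∀ p z, g (Nat.pair p z) = 0 ↔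
          (lt p.unpair.1 z = true ∧ lt z p.unpair.2 = true) := by
        intro p z
        simp only [hgdef, Nat.unpair_pair]
        cases h1 : lt p.unpair.1 z <;> cases h2 : lt z p.unpair.2 <;> simp
      have hF : Nat.Partrec fun p =>
          Nat.rfind fun z => (fun m => m = 0) <$> (↑g : ℕ →. ℕ) (Nat.pair p z) :=
        Nat.Partrec.rfind (Partrec.nat_iff.1 hgc.partrec)
      obtain ⟨c, hc⟩ := Nat.Partrec.Code.exists_code.1 hF
      set e := Encodable.encode c with he
      have hdom : ∀ p, (c.eval p).Dom ↔ ∃ z, lt p.unpair.1 z = true ∧ lt z p.unpair.2 = true := by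
        intro p
        rw [hc]
        refine Nat.rfind_dom.trans ?_
        constructor
        · rintro ⟨z, hz, -⟩
          refine ⟨z, (hg0 p z).1 ?_⟩
          simpa using hz
        · rintro ⟨z, hz⟩
          refine ⟨z, by simp [(hg0 p z).2 hz], fun {_} _ => ?_⟩
          simp
      have hjump : ∀ p, (jump (Nat.pair e p) = 0 ↔ ¬(c.eval p).Dom) := by
        intro p
        by_cases hd : (c.eval p).Dom <;>
          simp [jump, Nat.unpair_pair, he, Denumerable.ofNat_encode, hd]
      set k : ℕ → ℕ := fun w =>
        cond (lt w.unpair.1.unpair.1 w.unpair.1.unpair.2)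
          (cond (decide (w.unpair.2 = 0)) 0 1) 1 with hkdef
      have hkc : Computable k :=
        Computable.cond (hcomp.comp (u1.comp u1) (u2.comp u1))
          (Computable.cond ((Primrec.eq.comp (Primrec.snd.comp Primrec.unpair)
              (Primrec.const 0)).decide.to_comp) (Computable.const 0) (Computable.const 1))
          (Computable.const 1)
      set q : ℕ → ℕ := fun p => k (Nat.pair p (jump (Nat.pair e p))) with hqdef
      have hqrec : RecursiveInOracle jump ↑q := by
        have hpairE : Computable fun p : ℕ => Nat.pair e p :=
          (Primrec₂.natPair.comp (Primrec.const e) Primrec.id).to_comp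
        have h3 := RecursiveInOracle.pair ((Computable.id).recursiveInOracle jump)
          (RecursiveInOracle.comp RecursiveInOracle.oracle (hpairE.recursiveInOracle jump))
        have h4 := RecursiveInOracle.comp (hkc.recursiveInOracle jump) h3
        apply h4.of_eq
        intro n
        simp [hqdef, Seq.seq]
        change (Part.map (Nat.pair n) ((Part.some (Nat.pair e n)).bind fun y => Part.some (jump y))).bind (fun y => Part.some (k y)) = _
        simp
      have hq0 : ∀ x y, q (Nat.pair x y) = 0 ↔
          (lt x y = true ∧ ∀ z, ¬(lt x z = true ∧ lt z y = true)) := by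
        intro x y
        have hnm : jump (Nat.pair e (Nat.pair x y)) = 0 ↔
            ∀ z, ¬(lt x z = true ∧ lt z y = true) := by
          rw [hjump, hdom, Nat.unpair_pair]
          push_neg
          simp [not_and]
        simp only [hqdef, hkdef, Nat.unpair_pair]
        cases hxy : lt x y
        · simp
        · by_cases hj : jump (Nat.pair e (Nat.pair x y)) = 0
          · simp [hj, hnm.1 hj]
          · simp only [hj, decide_false, cond_false, cond_true]
            constructor
            · intro h; exact absurd h (by norm_num)
            · rintro ⟨-, h2⟩
              exact absurd (hnm.2 h2) hj
      set a := findChain q m with ha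
      have hstepgood : ∀ n, (∃ y, lt (a n) y = true) → ∃ y, q (Nat.pair (a n) y) = 0 := by
        intro n h
        obtain ⟨y, hy, hns⟩ := hsu (a n) h
        exact ⟨y, (hq0 _ _).2 ⟨hy, hns⟩⟩
      have nonmax : ∀ n, ∃ y, lt (a n) y = true := by
        by_contra hcon
        push_neg at hcon
        have hcon' : ∃ n, ∀ y, lt (a n) y = false := by
          obtain ⟨n, hn⟩ := hcon
          exact ⟨n, fun y => by simpa using hn y⟩
        set kk := Nat.find hcon' with hkk
        have hkspec : ∀ y, lt (a kk) y = false := Nat.find_spec hcon'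
        have hchain : ∀ i, i < kk → lt (a i) (a (i + 1)) = true ∧
            ∀ z, ¬(lt (a i) z = true ∧ lt z (a (i + 1)) = true) := by
          intro i hik
          have hnm : ∃ y, lt (a i) y = true := by
            have := Nat.find_min hcon' hik
            push_neg at this
            obtain ⟨y, hy⟩ := this
            exact ⟨y, by simpa using hy⟩
          have hexi := hstepgood i hnm
          have hfi : a (i + 1) = Nat.find hexi := findChain_succ hexi
          have := Nat.find_spec hexi
          rw [← hfi] at this
          exact (hq0 _ _).1 this
        have hall : ∀ y, ∃ i, i ≤ kk ∧ y = a i := by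
          intro y
          have hky : lt (a kk) y = false := hkspec y
          have hexist : ∃ i, lt (a i) y = false := ⟨kk, hky⟩
          have hjk : Nat.find hexist ≤ kk := Nat.find_min' hexist hky
          have hjspec : lt (a (Nat.find hexist)) y = false := Nat.find_spec hexist
          cases hj : Nat.find hexist with
          | zero =>
            rw [hj] at hjspec
            refine ⟨0, Nat.zero_le _, ?_⟩
            by_contra hne
            rcases htotal y (a 0) hne with h | h
            · have : a 0 = m := rfl
              rw [this] at h
              exact absurd h (by simp [hm y])
            · exact absurd h (by simp [hjspec])
          | succ i =>
            have hik : i < kk := by omega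
            have hilt : lt (a i) y = true := by
              have := Nat.find_min hexist (by omega : i < Nat.find hexist)
              simpa using this
            obtain ⟨hstep1, hstep2⟩ := hchain i hik
            rw [hj] at hjspec
            by_cases hye : y = a (i + 1)
            · exact ⟨i + 1, by omega, hye⟩
            · rcases htotal y (a (i + 1)) hye with h | h
              · exact absurd ⟨hilt, h⟩ (hstep2 y)
              · exact absurd h (by simp [hjspec])
        have hfin : (Set.univ : Set ℕ).Finite := by
          apply Set.Finite.subset (((Finset.range (kk + 1)).image a).finite_toSet)
          intro y _
          obtain ⟨i, hik, rfl⟩ := hall y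
          exact Finset.mem_coe.2 (Finset.mem_image.2 ⟨i, Finset.mem_range.2 (by omega), rfl⟩)
        exact Set.infinite_univ hfin
      have hex : ∀ n, ∃ y, q (Nat.pair (a n) y) = 0 := fun n => hstepgood n (nonmax n)
      have hfind : ∀ n, a (n + 1) = Nat.find (hex n) := fun n => findChain_succ (hex n)
      refine ⟨a, recursiveIn_find_chain hqrec hex hfind, ?_⟩
      intro n
      have h := Nat.find_spec (hex n)
      rw [← hfind n] at h
      exact ((hq0 _ _).1 h).1
    · -- some non-maximal element with no immediate successor: computable descending sequence
      left
      push_neg at hsu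
      obtain ⟨x0, hx0ex, hx0⟩ := hsu
      obtain ⟨y0, hy0⟩ := hx0ex
      set q : ℕ → ℕ := fun p =>
        cond (lt x0 p.unpair.2) (cond (lt p.unpair.2 p.unpair.1) 0 1) 1 with hqdef
      have hqc : Computable q :=
        Computable.cond (hcomp.comp (Computable.const x0) u2)
          (Computable.cond (hcomp.comp u2 u1) (Computable.const 0) (Computable.const 1))
          (Computable.const 1)
      have hq0 : ∀ x y, q (Nat.pair x y) = 0 ↔ (lt x0 y = true ∧ lt y x = true) := by
        intro x y
        simp only [hqdef, Nat.unpair_pair]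
        cases h1 : lt x0 y <;> cases h2 : lt y x <;> simp
      set a := findChain q y0 with ha
      have hstepgood : ∀ n, lt x0 (a n) = true → ∃ y, q (Nat.pair (a n) y) = 0 := by
        intro n h
        obtain ⟨z, hz1, hz2⟩ := hx0 (a n) h
        exact ⟨z, (hq0 _ _).2 ⟨hz1, hz2⟩⟩
      have inv : ∀ n, lt x0 (a n) = true := by
        intro n
        induction n with
        | zero => exact hy0
        | succ n IH =>
          have hexn := hstepgood n IH
          have hfn : a (n + 1) = Nat.find hexn := findChain_succ hexn
          have h := Nat.find_spec hexn
          rw [← hfn] at h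
          exact ((hq0 _ _).1 h).1
      have hex : ∀ n, ∃ y, q (Nat.pair (a n) y) = 0 := fun n => hstepgood n (inv n)
      have hfind : ∀ n, a (n + 1) = Nat.find (hex n) := fun n => findChain_succ (hex n)
      refine ⟨a, ?_, ?_⟩
      · exact Partrec.nat_iff.2
          ((recursiveIn_find_chain (hqc.recursiveInOracle _) hex hfind).partrec_of_zero)
      · intro n
        have h := Nat.find_spec (hex n)
        rw [← hfind n] at h
        exact ((hq0 _ _).1 h).2
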